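/- arXiv:2004.07962 — 3 statements merged into one kernel-verified Lean document; each statement's English description precedes it below -/
import Mathlib

section
/- Let k > 0, Dᵤ > 0, D_v > 0, c > 0 and r₃, r₄ be real numbers, and set A = −DᵤD_v/c and B = (Dᵤ − c²)/c. Then the polynomial identity k·u(u−1)·{A·[k²(2u−1)² + 2k²·u(u−1)] + B} = −u(u−1)(u−r₃)(u−r₄) holds for all real u if and only if c = 6k³DᵤD_v, r₃ + r₄ = 1, and r₃·r₄ = 1/6 − ρ, where ρ = k(Dᵤ − c²)/c. -/
/-- With `A = −DᵤD_v/c`, `B = (Dᵤ − c²)/c`, the identity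
`k·u(u−1)·{A·[k²(2u−1)² + 2k²·u(u−1)] + B} = −u(u−1)(u−r₃)(u−r₄)` holds for all
real `u` iff `c = 6k³DᵤD_v`, `r₃ + r₄ = 1` and `r₃·r₄ = 1/6 − ρ`,
where `ρ = k(Dᵤ − c²)/c`. -/
theorem stmt_9 (k Du Dv c r₃ r₄ : ℝ)
    (hk : 0 < k) (hDu : 0 < Du) (hDv : 0 < Dv) (hc : 0 < c) :
    (∀ u : ℝ,
        k * u * (u - 1) *
          ((-(Du * Dv) / c) * (k ^ 2 * (2 * u - 1) ^ 2 + 2 * k ^ 2 * u * (u - 1))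
            + (Du - c ^ 2) / c)
        = -(u * (u - 1) * (u - r₃) * (u - r₄)))
    ↔ (c = 6 * k ^ 3 * Du * Dv ∧ r₃ + r₄ = 1 ∧
        r₃ * r₄ = 1 / 6 - k * (Du - c ^ 2) / c) := by
  have hc0 : c ≠ 0 := ne_of_gt hc
  constructor
  · intro h
    have h2 := h 2
    have h3 := h 3
    have hm := h (-1)
    field_simp at h2 h3 hm
    have hs : r₃ + r₄ = 1 := by
      have : (6*c^2) * (r₃ + r₄) = (6*c^2) * 1 := by linear_combination (-2*c)*(h2 + hm)
      exact mul_left_cancel₀ (by positivity) this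
    have hcf : c = 6 * k ^ 3 * Du * Dv := by
      have : (24*c) * c = (24*c) * (6 * k ^ 3 * Du * Dv) := by
        linear_combination 6*c*(h3 - h2) + 6*c^2*hs
      exact mul_left_cancel₀ (by positivity) this
    refine ⟨hcf, hs, ?_⟩
    have key : c * (r₃ * r₄ * c * 6) = c * (c - k * (Du - c^2) * 6) := by
      linear_combination 6*c*h2 + 12*c^2*hs - 13*c*hcf
    have key2 := mul_left_cancel₀ hc0 key
    field_simp
    linarith [key2]
  · rintro ⟨h1, h2, h3⟩
    have h3' : r₃ * r₄ * c = c / 6 - k * (Du - c ^ 2) := by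
      field_simp at h3
      linarith [h3]
    intro u
    field_simp
    linear_combination ((u*(u-1)*(6*u^2-6*u+1))/6) * h1
      + (-(c*u^2*(u-1))) * h2 + (u*(u-1)) * h3'
end

section
/- Let k > 0, Dᵤ > 0, D_v > 0, and v* ∈ ℝ. Set c = 6k³DᵤD_v, ρ = k(Dᵤ − c²)/c, and assume 3 + 36ρ ≥ 0; let r₃ = 1/2 − √(3 + 36ρ)/6 and r₄ = 1/2 + √(3 + 36ρ)/6. Define û(ξ) = e^{−kξ}/(1 + e^{−kξ}) and v̂(ξ) = v* + (Dᵤ/c)·û'(ξ), and define u(x,t) = û(x − ct), v(x,t) = v̂(x − ct). Then (u, v) is a classical solution of the reaction-cross-diffusion system ∂u/∂t = −u(u−1)(u−r₃)(u−r₄) + v* − v + D_v·∂²v/∂x², ∂v/∂t = −Dᵤ·∂²u/∂x² for all (x,t) ∈ ℝ². -/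
private noncomputable def G1 (k ξ : ℝ) : ℝ :=
  -k * Real.exp (-k * ξ) / (1 + Real.exp (-k * ξ)) ^ 2

private noncomputable def G2 (k ξ : ℝ) : ℝ :=
  k ^ 2 * (Real.exp (-k * ξ) - Real.exp (-k * ξ) ^ 2) / (1 + Real.exp (-k * ξ)) ^ 3

private noncomputable def G3 (k ξ : ℝ) : ℝ :=
  -k ^ 3 * (Real.exp (-k * ξ) - 4 * Real.exp (-k * ξ) ^ 2 + Real.exp (-k * ξ) ^ 3)
    / (1 + Real.exp (-k * ξ)) ^ 4

private lemma expAux (k ξ : ℝ) :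
    HasDerivAt (fun x : ℝ => Real.exp (-k * x)) (-k * Real.exp (-k * ξ)) ξ := by
  have h : HasDerivAt (fun x : ℝ => -k * x) (-k) ξ := by
    simpa using (hasDerivAt_id ξ).const_mul (-k)
  simpa [mul_comm] using h.exp

private lemma hG1 (k ξ : ℝ) :
    HasDerivAt (fun x => Real.exp (-k * x) / (1 + Real.exp (-k * x))) (G1 k ξ) ξ := by
  have hne : (1 : ℝ) + Real.exp (-k * ξ) ≠ 0 := by positivity
  have h := (expAux k ξ).div ((expAux k ξ).const_add 1) hne
  refine h.congr_deriv ?_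
  unfold G1
  field_simp
  ring

private lemma hG2 (k ξ : ℝ) :
    HasDerivAt (fun x => G1 k x) (G2 k ξ) ξ := by
  have hne : (1 : ℝ) + Real.exp (-k * ξ) ≠ 0 := by positivity
  have h := ((expAux k ξ).const_mul (-k)).div
    (((expAux k ξ).const_add 1).pow 2) (pow_ne_zero 2 hne)
  unfold G1 G2
  refine h.congr_deriv ?_
  simp only [Pi.pow_apply]
  field_simp
  ring

private lemma hG3 (k ξ : ℝ) :
    HasDerivAt (fun x => G2 k x) (G3 k ξ) ξ := by
  have hne : (1 : ℝ) + Real.exp (-k * ξ) ≠ 0 := by positivity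
  have hnum : HasDerivAt
      (fun x : ℝ => k ^ 2 * (Real.exp (-k * x) - Real.exp (-k * x) ^ 2))
      (k ^ 2 * (-k * Real.exp (-k * ξ)
        - 2 * Real.exp (-k * ξ) ^ 1 * (-k * Real.exp (-k * ξ)))) ξ :=
    ((expAux k ξ).sub ((expAux k ξ).pow 2)).const_mul (k ^ 2)
  have h := hnum.div (((expAux k ξ).const_add 1).pow 3) (pow_ne_zero 3 hne)
  unfold G2 G3
  refine h.congr_deriv ?_
  simp only [Pi.pow_apply]
  field_simp
  ring

/-- The travelling front `u(x,t) = û(x − ct)`, `v(x,t) = v̂(x − ct)`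
with `û(ξ) = e^{−kξ}/(1 + e^{−kξ})`, `v̂ = v* + (Dᵤ/c)û'`, `c = 6k³DᵤD_v`, and
roots `r₃, r₄` from the coefficient matching, is a classical solution of the
reaction-cross-diffusion system
`u_t = −u(u−1)(u−r₃)(u−r₄) + v* − v + D_v v_xx`, `v_t = −Dᵤ u_xx` on all of ℝ². -/
theorem stmt_16 (k Du Dv vs : ℝ) (hk : 0 < k) (hDu : 0 < Du) (hDv : 0 < Dv)
    (c ρ r₃ r₄ : ℝ)
    (hc : c = 6 * k ^ 3 * Du * Dv) (hρ : ρ = k * (Du - c ^ 2) / c)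
    (hdisc : 0 ≤ 3 + 36 * ρ)
    (hr₃ : r₃ = 1 / 2 - Real.sqrt (3 + 36 * ρ) / 6)
    (hr₄ : r₄ = 1 / 2 + Real.sqrt (3 + 36 * ρ) / 6)
    (uh vh : ℝ → ℝ)
    (huh : ∀ ξ : ℝ, uh ξ = Real.exp (-k * ξ) / (1 + Real.exp (-k * ξ)))
    (hvh : ∀ ξ : ℝ, vh ξ = vs + (Du / c) * deriv uh ξ)
    (u v : ℝ → ℝ → ℝ)
    (hu : ∀ x t : ℝ, u x t = uh (x - c * t))
    (hv : ∀ x t : ℝ, v x t = vh (x - c * t)) :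
    ∀ x t : ℝ,
      deriv (fun s => u x s) t
        = -(u x t) * (u x t - 1) * (u x t - r₃) * (u x t - r₄) + vs - v x t
          + Dv * deriv (deriv (fun y => v y t)) x ∧
      deriv (fun s => v x s) t = -Du * deriv (deriv (fun y => u y t)) x := by
  have hcpos : 0 < c := by rw [hc]; positivity
  have hc0 : c ≠ 0 := hcpos.ne'
  have huh_eq : uh = fun x => Real.exp (-k * x) / (1 + Real.exp (-k * x)) :=
    funext huh
  have hderiv_uh : deriv uh = fun ξ => G1 k ξ := by
    funext ξ
    rw [huh_eq]
    exact (hG1 k ξ).deriv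
  have hvh' : ∀ ξ : ℝ, vh ξ = vs + (Du / c) * G1 k ξ := by
    intro ξ
    rw [hvh ξ, hderiv_uh]
  -- quartic factorisation fact
  have hs : Real.sqrt (3 + 36 * ρ) ^ 2 = 3 + 36 * ρ := Real.sq_sqrt hdisc
  have hquad : ∀ U : ℝ,
      -U * (U - 1) * (U - r₃) * (U - r₄)
        = -U * (U - 1) * (U ^ 2 - U + (1 / 6 - ρ)) := by
    intro U
    rw [hr₃, hr₄]
    linear_combination (U * (U - 1) / 36) * hs
  intro x t
  -- time derivative of u
  have hAt : HasDerivAt (fun s : ℝ => x - c * s) (-c) t := by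
    simpa using ((hasDerivAt_id t).const_mul c).const_sub x
  have hut : deriv (fun s => u x s) t = G1 k (x - c * t) * (-c) := by
    have heq : (fun s => u x s) = fun s => uh (x - c * s) := funext fun s => hu x s
    rw [heq, huh_eq]
    exact ((hG1 k (x - c * t)).comp t hAt).deriv
  -- time derivative of v
  have hvt : deriv (fun s => v x s) t = Du / c * (G2 k (x - c * t) * (-c)) := by
    have heq : (fun s => v x s) = fun s => vs + Du / c * G1 k (x - c * s) :=
      funext fun s => by rw [hv x s, hvh' (x - c * s)]
    rw [heq]
    exact ((((hG2 k (x - c * t)).comp t hAt).const_mul (Du / c)).const_add vs).deriv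
  -- first space derivative of u
  have hx1 : ∀ y : ℝ, HasDerivAt (fun y : ℝ => y - c * t) 1 y := fun y => by
    simpa using (hasDerivAt_id y).sub_const (c * t)
  have hux : deriv (fun y => u y t) = fun y => G1 k (y - c * t) := by
    funext y
    have heq : (fun y => u y t) = fun y => uh (y - c * t) := funext fun y => hu y t
    rw [heq, huh_eq]
    simpa [Function.comp_def] using ((hG1 k (y - c * t)).comp y (hx1 y)).deriv
  have huxx : deriv (deriv (fun y => u y t)) x = G2 k (x - c * t) := by
    rw [hux]
    simpa [Function.comp_def] using ((hG2 k (x - c * t)).comp x (hx1 x)).deriv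
  -- space derivatives of v
  have hvx : deriv (fun y => v y t) = fun y => Du / c * G2 k (y - c * t) := by
    funext y
    have heq : (fun y => v y t) = fun y => vs + Du / c * G1 k (y - c * t) :=
      funext fun y => by rw [hv y t, hvh' (y - c * t)]
    rw [heq]
    simpa using
      ((((hG2 k (y - c * t)).comp y (hx1 y)).const_mul (Du / c)).const_add vs).deriv
  have hvxx : deriv (deriv (fun y => v y t)) x = Du / c * G3 k (x - c * t) := by
    rw [hvx]
    simpa using (((hG3 k (x - c * t)).comp x (hx1 x)).const_mul (Du / c)).deriv
  have hne : (1 : ℝ) + Real.exp (-k * (x - c * t)) ≠ 0 := by positivity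
  constructor
  · rw [hut, hvxx, hu x t, hv x t, hvh' (x - c * t), huh_eq]
    rw [hquad]
    simp only [G1, G2, G3]
    rw [hρ, hc]
    have hc0' : (6 : ℝ) * k ^ 3 * Du * Dv ≠ 0 := by positivity
    field_simp
    ring
  · rw [hvt, huxx]
    field_simp
end

section
/- Let k > 0, Dᵤ > 0, D_v > 0, set c = 6k³DᵤD_v and ρ = k(Dᵤ − c²)/c, and let r₃, r₄ be real numbers with r₃ + r₄ = 1 and r₃·r₄ = 1/6 − ρ. Then û(ξ) = e^{−kξ}/(1 + e^{−kξ}) satisfies the third-order ordinary differential equation D_v·Dᵤ·û'''(ξ) + (c² − Dᵤ)·û'(ξ) − c·û(ξ)(û(ξ)−1)(û(ξ)−r₃)(û(ξ)−r₄) = 0 for all ξ ∈ ℝ, together with û(+∞) = 0, û(−∞) = 1. -/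
open Filter

/-- The profile `û(ξ) = e^{−kξ}/(1 + e^{−kξ})` satisfies the
third-order travelling-wave ODE
`D_v·Dᵤ·û''' + (c² − Dᵤ)·û' − c·û(û−1)(û−r₃)(û−r₄) = 0` on ℝ, with
`û(+∞) = 0` and `û(−∞) = 1`, where `c = 6k³DᵤD_v`, `ρ = k(Dᵤ − c²)/c`,
`r₃ + r₄ = 1` and `r₃r₄ = 1/6 − ρ`. -/
theorem stmt_17 (k Du Dv : ℝ) (hk : 0 < k) (hDu : 0 < Du) (hDv : 0 < Dv)
    (c ρ r₃ r₄ : ℝ)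
    (hc : c = 6 * k ^ 3 * Du * Dv) (hρ : ρ = k * (Du - c ^ 2) / c)
    (hsum : r₃ + r₄ = 1) (hprod : r₃ * r₄ = 1 / 6 - ρ)
    (uh : ℝ → ℝ)
    (huh : ∀ ξ : ℝ, uh ξ = Real.exp (-k * ξ) / (1 + Real.exp (-k * ξ))) :
    (∀ ξ : ℝ,
      Dv * Du * deriv (deriv (deriv uh)) ξ + (c ^ 2 - Du) * deriv uh ξ
        - c * (uh ξ * (uh ξ - 1) * (uh ξ - r₃) * (uh ξ - r₄)) = 0) ∧
    Tendsto uh atTop (nhds 0) ∧ Tendsto uh atBot (nhds 1) := by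
  have huh' : uh = fun x => Real.exp (-k * x) / (1 + Real.exp (-k * x)) := funext huh
  subst huh'
  have hEpos : ∀ x : ℝ, (0:ℝ) < 1 + Real.exp (-k * x) := fun x => by positivity
  have hEne : ∀ x : ℝ, (1 + Real.exp (-k * x)) ≠ 0 := fun x => (hEpos x).ne'
  have hE : ∀ x : ℝ, HasDerivAt (fun y => Real.exp (-k * y)) (Real.exp (-k * x) * (-k)) x :=
    fun x => by simpa using ((hasDerivAt_id x).const_mul (-k)).exp
  -- first derivative
  have h1 : ∀ x : ℝ, HasDerivAt (fun y => Real.exp (-k * y) / (1 + Real.exp (-k * y)))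
      (-k * Real.exp (-k * x) / (1 + Real.exp (-k * x)) ^ 2) x := by
    intro x
    have := (hE x).div ((hE x).const_add 1) (hEne x)
    convert this using 1
    rfl
    rfl
    rfl
    field_simp
    ring
  have hd1 : deriv (fun y => Real.exp (-k * y) / (1 + Real.exp (-k * y)))
      = fun x => -k * Real.exp (-k * x) / (1 + Real.exp (-k * x)) ^ 2 :=
    funext fun x => (h1 x).deriv
  -- second derivative
  have h2 : ∀ x : ℝ, HasDerivAt (fun y => -k * Real.exp (-k * y) / (1 + Real.exp (-k * y)) ^ 2)
      (k ^ 2 * Real.exp (-k * x) * (1 - Real.exp (-k * x)) / (1 + Real.exp (-k * x)) ^ 3) x := by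
    intro x
    have hden : HasDerivAt (fun y => (1 + Real.exp (-k * y)) ^ 2)
        (2 * (1 + Real.exp (-k * x)) * (Real.exp (-k * x) * (-k))) x := by
      have := ((hE x).const_add 1).pow 2
      simpa [Pi.pow_def, mul_comm, mul_assoc, mul_left_comm] using this
    have hnum : HasDerivAt (fun y => -k * Real.exp (-k * y))
        (-k * (Real.exp (-k * x) * (-k))) x := (hE x).const_mul (-k)
    have := hnum.div hden (by positivity)
    convert this using 1
    rfl
    rfl
    rfl
    field_simp
    ring
  have hd2 : deriv (deriv (fun y => Real.exp (-k * y) / (1 + Real.exp (-k * y))))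
      = fun x => k ^ 2 * Real.exp (-k * x) * (1 - Real.exp (-k * x)) / (1 + Real.exp (-k * x)) ^ 3 := by
    rw [hd1]; exact funext fun x => (h2 x).deriv
  -- third derivative
  have h3 : ∀ x : ℝ, HasDerivAt
      (fun y => k ^ 2 * Real.exp (-k * y) * (1 - Real.exp (-k * y)) / (1 + Real.exp (-k * y)) ^ 3)
      (k ^ 3 * Real.exp (-k * x) * (-(Real.exp (-k * x)) ^ 2 + 4 * Real.exp (-k * x) - 1)
        / (1 + Real.exp (-k * x)) ^ 4) x := by
    intro x
    have hden : HasDerivAt (fun y => (1 + Real.exp (-k * y)) ^ 3)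
        (3 * (1 + Real.exp (-k * x)) ^ 2 * (Real.exp (-k * x) * (-k))) x := by
      have := ((hE x).const_add 1).pow 3
      simpa [Pi.pow_def, mul_comm, mul_assoc, mul_left_comm] using this
    have hnum : HasDerivAt (fun y => k ^ 2 * Real.exp (-k * y) * (1 - Real.exp (-k * y)))
        (k ^ 2 * (Real.exp (-k * x) * (-k)) * (1 - Real.exp (-k * x))
          + k ^ 2 * Real.exp (-k * x) * (-(Real.exp (-k * x) * (-k)))) x := by
      have ha := (hE x).const_mul (k ^ 2)
      have hb := (hE x).const_sub 1
      convert ha.mul hb using 1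
      rfl
      rfl
      rfl
    have := hnum.div hden (by positivity)
    convert this using 1
    rfl
    rfl
    rfl
    field_simp
    ring
  have hd3 : deriv (deriv (deriv (fun y => Real.exp (-k * y) / (1 + Real.exp (-k * y)))))
      = fun x => k ^ 3 * Real.exp (-k * x) * (-(Real.exp (-k * x)) ^ 2 + 4 * Real.exp (-k * x) - 1)
        / (1 + Real.exp (-k * x)) ^ 4 := by
    rw [hd2]; exact funext fun x => (h3 x).deriv
  refine ⟨?_, ?_, ?_⟩
  · intro ξ
    rw [hd3, hd1]
    simp only
    set u : ℝ := Real.exp (-k * ξ) / (1 + Real.exp (-k * ξ)) with hu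
    have h4 : u * (u - 1) * (u - r₃) * (u - r₄) = u * (u - 1) * (u ^ 2 - u + 1 / 6 - ρ) := by
      linear_combination (u * (u - 1) * (-u)) * hsum + (u * (u - 1)) * hprod
    rw [h4]
    subst hc
    subst hρ
    have hcne : (6 : ℝ) * k ^ 3 * Du * Dv ≠ 0 := by positivity
    rw [hu]
    field_simp
    ring
  · -- uh → 0 at top
    have hlim : Tendsto (fun x : ℝ => Real.exp (-k * x)) atTop (nhds 0) := by
      apply Real.tendsto_exp_atBot.comp
      exact (tendsto_id.const_mul_atTop_of_neg (neg_neg_iff_pos.mpr hk) |>.mono_right le_rfl)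
    have := hlim.div (hlim.const_add 1) (by norm_num)
    simpa [Pi.div_def] using this
  · have hlim : Tendsto (fun x : ℝ => Real.exp (k * x)) atBot (nhds 0) := by
      apply Real.tendsto_exp_atBot.comp
      exact tendsto_id.const_mul_atBot hk
    have heq : (fun x : ℝ => Real.exp (-k * x) / (1 + Real.exp (-k * x)))
        = fun x => (Real.exp (k * x) + 1)⁻¹ := by
      funext x
      rw [show -k * x = -(k * x) by ring, Real.exp_neg]
      have h0 : Real.exp (k * x) ≠ 0 := (Real.exp_pos _).ne'
      field_simp
    rw [heq]
    have := (hlim.add_const 1).inv₀ (by norm_num)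
    simpa using this
end
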